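/- Let p be a prime and let X ⊆ ℝ^d be a finite set with |X| = d + 2 such that every squared distance between distinct points of X is a rational number whose denominator is coprime to p and whose value is congruent to 1 modulo p (in the localization ℤ_(p)). Then p divides d + 2. -/

import Mathlib

open Matrix Finset

theorem mod_p_one_dist_tight_dim (p : ℕ) (hp : p.Prime) (d : ℕ)
    (X : Finset (EuclideanSpace ℝ (Fin d)))
    (h : ∀ x ∈ X, ∀ y ∈ X, x ≠ y →
      ∃ a b : ℤ, ¬ (p : ℤ) ∣ b ∧ dist x y ^ 2 = (a : ℝ) / (b : ℝ) ∧ (p : ℤ) ∣ (a - b))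
    (hcard : X.card = d + 2) :
    p ∣ (d + 2) := by
  classical
  -- enumerate the points
  obtain ⟨x, hxinj, hxX⟩ : ∃ x : Fin (d+2) → EuclideanSpace ℝ (Fin d),
      Function.Injective x ∧ ∀ i, x i ∈ X := by
    refine ⟨fun i => (X.equivFin.symm (finCongr hcard.symm i) : _), ?_, fun i => (X.equivFin.symm _).2⟩
    intro i j hij
    have := Subtype.ext hij
    simpa using congrArg (finCongr hcard) (X.equivFin.symm.injective this)
  have key : ∀ i j : Fin (d+2), i ≠ j → ∃ a b : ℤ, ¬ (p : ℤ) ∣ b ∧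
      dist (x i) (x j) ^ 2 = (a : ℝ) / (b : ℝ) ∧ (p : ℤ) ∣ (a - b) :=
    fun i j hij => h (x i) (hxX i) (x j) (hxX j) (fun he => hij (hxinj he))
  choose! a b hb hval hmod using key
  have hpZ : Prime (p : ℤ) := Nat.prime_iff_prime_int.mp hp
  -- common denominator
  set B : ℤ := ∏ i : Fin (d+2), ∏ j : Fin (d+2), (if i = j then 1 else b i j) with hB
  have hbdvdB : ∀ i j : Fin (d+2), i ≠ j → b i j ∣ B := by
    intro i j hij
    have h1 : (if i = j then 1 else b i j) ∣ ∏ j : Fin (d+2), (if i = j then 1 else b i j) :=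
      Finset.dvd_prod_of_mem _ (Finset.mem_univ j)
    have h2 : (∏ j : Fin (d+2), (if i = j then 1 else b i j)) ∣ B :=
      Finset.dvd_prod_of_mem _ (Finset.mem_univ i)
    simpa [if_neg hij] using h1.trans h2
  have hpB : ¬ (p : ℤ) ∣ B := by
    intro hdvd
    rw [hB, hpZ.dvd_finset_prod_iff] at hdvd
    obtain ⟨i, -, hi⟩ := hdvd
    rw [hpZ.dvd_finset_prod_iff] at hi
    obtain ⟨j, -, hj⟩ := hi
    by_cases hij : i = j
    · simp [hij] at hj
      exact hpZ.not_dvd_one hj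
    · rw [if_neg hij] at hj
      exact hb i j hij hj
  -- integer entries
  set c : Fin (d+2) → Fin (d+2) → ℤ :=
    fun i j => if i = j then 0 else (B / b i j) * a i j with hc
  have hbne : ∀ i j : Fin (d+2), i ≠ j → (b i j : ℝ) ≠ 0 := by
    intro i j hij hb0
    exact hb i j hij (by rw [show b i j = 0 by exact_mod_cast hb0]; exact dvd_zero _)
  have hcR : ∀ i j : Fin (d+2), ((c i j : ℤ) : ℝ) = B * dist (x i) (x j) ^ 2 := by
    intro i j
    by_cases hij : i = j
    · simp [hc, hij]
    · rw [hc]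
      simp only [if_neg hij]
      rw [hval i j hij]
      push_cast [Int.cast_div_charZero (hbdvdB i j hij)]
      field_simp
  have hcmod : ∀ i j : Fin (d+2), i ≠ j → (p : ℤ) ∣ (c i j - B) := by
    intro i j hij
    have hBb : (B / b i j) * b i j = B := Int.ediv_mul_cancel (hbdvdB i j hij)
    have : c i j - B = (B / b i j) * (a i j - b i j) := by
      rw [hc]; simp only [if_neg hij]; rw [mul_sub, hBb]
    rw [this]
    exact Dvd.dvd.mul_left (hmod i j hij) _
  -- the Gram matrix
  set v : Fin (d+1) → EuclideanSpace ℝ (Fin d) := fun i => x i.succ - x 0 with hv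
  set G : Matrix (Fin (d+1)) (Fin (d+1)) ℝ := fun i j => (inner ℝ (v i) (v j) : ℝ) with hG
  have hdetG : G.det = 0 := by
    have hnotli : ¬ LinearIndependent ℝ v := by
      intro hli
      have := hli.fintype_card_le_finrank
      rw [finrank_euclideanSpace_fin] at this
      simp at this
    obtain ⟨g, hgsum, i0, hgi0⟩ := Fintype.not_linearIndependent_iff.mp hnotli
    refine (Matrix.exists_mulVec_eq_zero_iff).mp ⟨g, ?_, ?_⟩
    · intro hg0; exact hgi0 (congrFun hg0 i0)
    · funext i
      have step : (G *ᵥ g) i = ∑ j, (inner ℝ (v i) (v j) : ℝ) * g j := by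
        simp only [Matrix.mulVec, dotProduct, hG]
      rw [Pi.zero_apply, step]
      calc ∑ j, (inner ℝ (v i) (v j) : ℝ) * g j
          = ∑ j, (inner ℝ (v i) (g j • v j) : ℝ) := by
            simp only [real_inner_smul_right]
            exact Finset.sum_congr rfl fun j _ => mul_comm _ _
        _ = (inner ℝ (v i) (∑ j, g j • v j) : ℝ) := (inner_sum _ _ _).symm
        _ = 0 := by rw [hgsum, inner_zero_right]
  -- the integer matrix
  set m : Matrix (Fin (d+1)) (Fin (d+1)) ℤ :=
    fun i j => c 0 i.succ + c 0 j.succ - c i.succ j.succ with hm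
  have h2G : ∀ i j, 2 * G i j = dist (x 0) (x i.succ) ^ 2 + dist (x 0) (x j.succ) ^ 2
      - dist (x i.succ) (x j.succ) ^ 2 := by
    intro i j
    have h1 : dist (x i.succ) (x j.succ) ^ 2 = ‖v i - v j‖ ^ 2 := by
      rw [hv]; simp only [sub_sub_sub_cancel_right]; rw [dist_eq_norm]
    have h2 : ∀ k : Fin (d+1), dist (x 0) (x k.succ) ^ 2 = ‖v k‖ ^ 2 := by
      intro k; rw [hv, dist_comm, dist_eq_norm]
    have polar := real_inner_eq_norm_mul_self_add_norm_mul_self_sub_norm_sub_mul_self_div_two (v i) (v j)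
    rw [h1, h2, h2]
    simp only [hG]
    rw [polar]
    ring
  have hmmap : m.map (Int.cast : ℤ → ℝ) = ((B : ℝ) * 2) • G := by
    funext i j
    simp only [Matrix.map_apply, Matrix.smul_apply, smul_eq_mul]
    push_cast [hm]
    rw [hcR, hcR, hcR]
    rw [show ((B:ℝ)*2) * G i j = (B:ℝ) * (2 * G i j) by ring, h2G]
    ring
  have hdetm : m.det = 0 := by
    have h1 : ((m.det : ℤ) : ℝ) = (((B : ℝ) * 2) • G).det := by
      rw [← hmmap]
      have := RingHom.map_det (Int.castRingHom ℝ) m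
      rw [RingHom.mapMatrix_apply] at this
      exact this
    rw [Matrix.det_smul, hdetG, mul_zero] at h1
    exact_mod_cast h1
  -- reduce mod p
  haveI : Fact p.Prime := ⟨hp⟩
  have hdetz : (m.map (Int.cast : ℤ → ZMod p)).det = 0 := by
    have := RingHom.map_det (Int.castRingHom (ZMod p)) m
    rw [RingHom.mapMatrix_apply] at this
    have h0 : (Int.castRingHom (ZMod p)) m.det = 0 := by rw [hdetm]; simp
    rw [h0] at this
    exact this.symm
  have hmodeq : m.map (Int.cast : ℤ → ZMod p) =
      (B : ZMod p) • (1 + Matrix.replicateCol (Fin 1) (fun _ => (1 : ZMod p)) * Matrix.replicateRow (Fin 1) (fun _ => (1 : ZMod p))) := by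
    have hcast : ∀ i j : Fin (d+2), i ≠ j → ((c i j : ℤ) : ZMod p) = (B : ZMod p) := by
      intro i j hij
      have h0 : ((c i j - B : ℤ) : ZMod p) = 0 :=
        (ZMod.intCast_zmod_eq_zero_iff_dvd _ _).mpr (hcmod i j hij)
      push_cast at h0
      linear_combination h0
    funext i j
    simp only [Matrix.map_apply, Matrix.smul_apply, Matrix.add_apply, Matrix.one_apply,
      Matrix.mul_apply, Matrix.replicateCol_apply, Matrix.replicateRow_apply, smul_eq_mul, Finset.sum_const,
      Finset.card_univ, Fintype.card_fin, one_smul, mul_one, one_mul, nsmul_eq_mul,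
      Nat.cast_one]
    have hm' : (m i j : ZMod p) = ((c 0 i.succ : ℤ) : ZMod p) + ((c 0 j.succ : ℤ) : ZMod p)
        - ((c i.succ j.succ : ℤ) : ZMod p) := by
      rw [hm]; push_cast; ring
    rw [hm', hcast 0 i.succ (Fin.succ_ne_zero i).symm, hcast 0 j.succ (Fin.succ_ne_zero j).symm]
    by_cases hij : i = j
    · subst hij
      have : c i.succ i.succ = 0 := by rw [hc]; simp
      rw [this]
      simp
      ring
    · have : i.succ ≠ j.succ := fun he => hij (Fin.succ_injective _ he)
      rw [hcast _ _ this]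
      simp [hij]
  rw [hmodeq, Matrix.det_smul] at hdetz
  have hdet1 : ((1 : Matrix (Fin (d+1)) (Fin (d+1)) (ZMod p)) + Matrix.replicateCol (Fin 1) (fun _ => (1 : ZMod p)) * Matrix.replicateRow (Fin 1) (fun _ => (1 : ZMod p))).det = 1 + (fun _ : Fin (d+1) => (1:ZMod p)) ⬝ᵥ (fun _ => (1:ZMod p)) :=
    Matrix.det_one_add_replicateCol_mul_replicateRow _ _
  rw [hdet1] at hdetz
  have hsum : ((1 : ZMod p) + (fun _ : Fin (d+1) => (1:ZMod p)) ⬝ᵥ (fun _ => (1:ZMod p)))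
      = ((d + 2 : ℕ) : ZMod p) := by
    simp [dotProduct]
    ring
  rw [hsum] at hdetz
  have hBne : ((B : ZMod p)) ≠ 0 := by
    rw [Ne, ZMod.intCast_zmod_eq_zero_iff_dvd]
    exact hpB
  have hfin : ((d + 2 : ℕ) : ZMod p) = 0 := by
    rcases mul_eq_zero.mp hdetz with h1 | h1
    · exact absurd h1 (pow_ne_zero _ hBne)
    · exact h1
  exact (ZMod.natCast_eq_zero_iff _ _).mp hfin
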